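/- Assume the family of snapshots {φ_j ε : j < n_t, ε ∈ E} is linearly independent. Then the ROM propagator is an unreduced block upper Hessenberg matrix: (a) (P^ROM)_{(j,ε),(l,ε')} = 0 whenever j > l + 1; and (b) for every l ≤ n_t − 2, the subdiagonal E×E block ((P^ROM)_{(l+1,α),(l,ε')})_{α,ε'} is an invertible matrix, satisfying (P^ROM)_{l+1,l} · R_{l,l} = R_{l+1,l+1}, where R_{j,j} denotes the (invertible) diagonal E×E block (R_{(j,α),(j,ε')})_{α,ε'}. -/

import Mathlib

open Matrix
open scoped RealInnerProductSpace

/-- Assume the snapshots are linearly independent. Then the ROM propagator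
is an unreduced block upper Hessenberg matrix: (a) `(P^ROM)_{(j,ε),(l,ε')} = 0` whenever
`j > l + 1`; and (b) for every `l ≤ n_t − 2`, the subdiagonal `E×E` block is invertible
and satisfies `(P^ROM)_{l+1,l} · R_{l,l} = R_{l+1,l+1}`. -/
theorem rom_propagator_block_hessenberg
    {H : Type*} [NormedAddCommGroup H] [InnerProductSpace ℝ H]
    {E : Type*} [Fintype E] [Nonempty E] [DecidableEq E]
    (P : H ≃ₗᵢ[ℝ] H) (φ₀ : E → H) (n_t : ℕ) (hn : 1 ≤ n_t)
    (φ : ℕ → E → H) (hφ : ∀ j ε, φ j ε = (⇑P)^[j] (φ₀ ε))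
    (hind : LinearIndependent ℝ (fun p : Fin n_t × E => φ (p.1 : ℕ) p.2))
    (v : Fin n_t → E → H)
    (hv : ∀ (j l : Fin n_t) (ε ε' : E),
      ⟪v j ε, v l ε'⟫ = if (j, ε) = (l, ε') then 1 else 0)
    (hcausal : ∀ j : Fin n_t,
      Submodule.span ℝ {x : H | ∃ (k : Fin n_t) (α : E), k ≤ j ∧ x = v k α} =
      Submodule.span ℝ {x : H | ∃ (k : Fin n_t) (α : E), k ≤ j ∧ x = φ (k : ℕ) α})
    (R : Matrix (Fin n_t × E) (Fin n_t × E) ℝ)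
    (hR : ∀ (k l : Fin n_t) (α ε' : E), R (k, α) (l, ε') = ⟪v k α, φ (l : ℕ) ε'⟫)
    (PROM : Matrix (Fin n_t × E) (Fin n_t × E) ℝ)
    (hPROM : ∀ (k l : Fin n_t) (α ε' : E),
      PROM (k, α) (l, ε') = ⟪v k α, P (v l ε')⟫) :
    (∀ (j l : Fin n_t) (ε ε' : E), (l : ℕ) + 1 < (j : ℕ) → PROM (j, ε) (l, ε') = 0) ∧
    (∀ (l : Fin n_t) (hl : (l : ℕ) + 1 < n_t),
      IsUnit (Matrix.of fun α ε' : E => PROM (⟨(l : ℕ) + 1, hl⟩, α) (l, ε')) ∧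
      (Matrix.of fun α ε' : E => PROM (⟨(l : ℕ) + 1, hl⟩, α) (l, ε')) *
        (Matrix.of fun α ε' : E => R (l, α) (l, ε')) =
        (Matrix.of fun α ε' : E => R (⟨(l : ℕ) + 1, hl⟩, α) (⟨(l : ℕ) + 1, hl⟩, ε'))) := by
  classical
  have hstep : ∀ (j : ℕ) (ε : E), φ (j + 1) ε = P (φ j ε) := by
    intro j ε
    rw [hφ, hφ, Function.iterate_succ_apply']
  -- orthogonality of v j ε to the span of earlier v's
  have horth : ∀ (j m : Fin n_t) (ε : E), m < j →
      ∀ w ∈ Submodule.span ℝ {x : H | ∃ (k : Fin n_t) (α : E), k ≤ m ∧ x = v k α},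
      ⟪v j ε, w⟫ = 0 := by
    intro j m ε hm w hw
    have hsub : {x : H | ∃ (k : Fin n_t) (α : E), k ≤ m ∧ x = v k α} ⊆
        (LinearMap.ker ((innerSL ℝ (v j ε)).toLinearMap) : Submodule ℝ H) := by
      rintro x ⟨k, α, hk, rfl⟩
      have hne : j ≠ k := (lt_of_le_of_lt hk hm).ne'
      simp only [SetLike.mem_coe, LinearMap.mem_ker, ContinuousLinearMap.coe_coe,
        innerSL_apply_apply]
      rw [hv]
      simp [Prod.ext_iff, hne]
    have := Submodule.span_le.mpr hsub hw
    simpa using this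
  -- membership of v's in spans of φ's
  have hvmem : ∀ (m k : Fin n_t) (ε : E), k ≤ m →
      v k ε ∈ Submodule.span ℝ
        {x : H | ∃ (k' : Fin n_t) (α : E), k' ≤ m ∧ x = φ (k' : ℕ) α} := by
    intro m k ε hk
    rw [← hcausal]
    exact Submodule.subset_span ⟨k, ε, hk, rfl⟩
  -- P maps the span of snapshots up to l into the span up to l+1
  have hPmap : ∀ (l l1 : Fin n_t), (l1 : ℕ) = (l : ℕ) + 1 →
      ∀ w ∈ Submodule.span ℝ
        {x : H | ∃ (k : Fin n_t) (α : E), k ≤ l ∧ x = φ (k : ℕ) α},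
      P w ∈ Submodule.span ℝ
        {x : H | ∃ (k : Fin n_t) (α : E), k ≤ l1 ∧ x = φ (k : ℕ) α} := by
    intro l l1 hl1 w hw
    have hmem : P w ∈ Submodule.map (P.toLinearEquiv : H →ₗ[ℝ] H)
        (Submodule.span ℝ {x : H | ∃ (k : Fin n_t) (α : E), k ≤ l ∧ x = φ (k : ℕ) α}) :=
      ⟨w, hw, rfl⟩
    rw [Submodule.map_span] at hmem
    refine Submodule.span_le.mpr ?_ hmem
    rintro x ⟨y, ⟨k, α, hk, rfl⟩, rfl⟩
    refine Submodule.subset_span ?_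
    have hk1 : (k : ℕ) + 1 < n_t := by
      have := Fin.le_def.mp hk
      omega
    refine ⟨⟨(k : ℕ) + 1, hk1⟩, α, ?_, ?_⟩
    · rw [Fin.le_def]
      have := Fin.le_def.mp hk
      simp only [hl1]
      omega
    · simp [hstep]
  -- part (a) core
  have hzero : ∀ (j l : Fin n_t) (ε ε' : E), (l : ℕ) + 1 < (j : ℕ) →
      ⟪v j ε, P (v l ε')⟫ = 0 := by
    intro j l ε ε' hlt
    have hl1 : (l : ℕ) + 1 < n_t := lt_trans hlt j.isLt
    set l1 : Fin n_t := ⟨(l : ℕ) + 1, hl1⟩ with hl1def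
    have h1 : v l ε' ∈ Submodule.span ℝ
        {x : H | ∃ (k : Fin n_t) (α : E), k ≤ l ∧ x = φ (k : ℕ) α} :=
      hvmem l l ε' le_rfl
    have h2 := hPmap l l1 rfl _ h1
    rw [← hcausal] at h2
    exact horth j l1 ε (by rw [Fin.lt_def]; exact hlt) _ h2
  -- orthonormal expansion of elements of span of v's up to l
  have hexp : ∀ (l : Fin n_t) (w : H),
      w ∈ Submodule.span ℝ {x : H | ∃ (k : Fin n_t) (α : E), k ≤ l ∧ x = v k α} →
      w = ∑ p : Fin n_t × E,
        (if p.1 ≤ l then (⟪v p.1 p.2, w⟫ : ℝ) else 0) • v p.1 p.2 := by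
    intro l w hw
    set s := ∑ p : Fin n_t × E,
        (if p.1 ≤ l then (⟪v p.1 p.2, w⟫ : ℝ) else 0) • v p.1 p.2 with hs
    have hsmem : s ∈ Submodule.span ℝ
        {x : H | ∃ (k : Fin n_t) (α : E), k ≤ l ∧ x = v k α} := by
      refine Submodule.sum_mem _ fun p _ => ?_
      split_ifs with h
      · exact Submodule.smul_mem _ _ (Submodule.subset_span ⟨p.1, p.2, h, rfl⟩)
      · simp
    have hinner_s : ∀ (m : Fin n_t) (γ : E),
        (⟪v m γ, s⟫ : ℝ) = if m ≤ l then ⟪v m γ, w⟫ else 0 := by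
      intro m γ
      rw [hs, inner_sum]
      have hterm : ∀ p : Fin n_t × E,
          (⟪v m γ, (if p.1 ≤ l then (⟪v p.1 p.2, w⟫ : ℝ) else 0) • v p.1 p.2⟫ : ℝ)
            = if p = (m, γ) then (if m ≤ l then (⟪v m γ, w⟫ : ℝ) else 0) else 0 := by
        rintro ⟨k, β⟩
        rw [real_inner_smul_right, hv]
        by_cases hp : (k, β) = (m, γ)
        · rw [hp]; simp
        · have hne : (m, γ) ≠ ((k, β).1, (k, β).2) := Ne.symm hp
          simp only [hne, if_false, mul_zero, hp, if_neg hp]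
      rw [Finset.sum_congr rfl fun p _ => hterm p]
      simp
    have humem : w - s ∈ Submodule.span ℝ
        {x : H | ∃ (k : Fin n_t) (α : E), k ≤ l ∧ x = v k α} :=
      Submodule.sub_mem _ hw hsmem
    have hself : (⟪w - s, w - s⟫ : ℝ) = 0 := by
      have hker : {x : H | ∃ (k : Fin n_t) (α : E), k ≤ l ∧ x = v k α} ⊆
          (LinearMap.ker ((innerSL ℝ (w - s)).toLinearMap) : Submodule ℝ H) := by
        rintro x ⟨k, α, hk, rfl⟩
        simp only [SetLike.mem_coe, LinearMap.mem_ker, ContinuousLinearMap.coe_coe,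
          innerSL_apply_apply]
        rw [real_inner_comm, inner_sub_right, hinner_s, if_pos hk, sub_self]
      exact Submodule.span_le.mpr hker humem
    have := inner_self_eq_zero.mp hself
    rw [sub_eq_zero] at this
    exact this
  -- injectivity of the diagonal blocks
  have hDinj : ∀ (l : Fin n_t) (x : E → ℝ),
      (∀ α : E, ∑ ε' : E, (⟪v l α, φ (l : ℕ) ε'⟫ : ℝ) * x ε' = 0) → x = 0 := by
    intro l x hx
    set w := ∑ ε' : E, x ε' • φ (l : ℕ) ε' with hwdef
    have hwinner : ∀ α : E, (⟪v l α, w⟫ : ℝ) = 0 := by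
      intro α
      rw [hwdef, inner_sum]
      rw [← hx α]
      exact Finset.sum_congr rfl fun ε' _ => by rw [real_inner_smul_right, mul_comm]
    have hwmem : w ∈ Submodule.span ℝ
        {x : H | ∃ (k : Fin n_t) (α : E), k ≤ l ∧ x = v k α} := by
      rw [hcausal]
      exact Submodule.sum_mem _ fun ε' _ =>
        Submodule.smul_mem _ _ (Submodule.subset_span ⟨l, ε', le_rfl, rfl⟩)
    have hwexp := hexp l w hwmem
    have hwmem' : w ∈ Submodule.span ℝ
        ((fun p : Fin n_t × E => φ (p.1 : ℕ) p.2) '' {p : Fin n_t × E | p.1 < l}) := by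
      rw [hwexp]
      refine Submodule.sum_mem _ fun p _ => ?_
      by_cases hp1 : p.1 < l
      · rw [if_pos (le_of_lt hp1)]
        refine Submodule.smul_mem _ _ ?_
        have hln : 0 < (l : ℕ) := by
          have := Fin.lt_def.mp hp1
          omega
        have hl'lt : (l : ℕ) - 1 < n_t := by omega
        have hset : ((fun p : Fin n_t × E => φ (p.1 : ℕ) p.2) '' {p : Fin n_t × E | p.1 < l})
            = {x : H | ∃ (k : Fin n_t) (α : E),
                k ≤ ⟨(l : ℕ) - 1, hl'lt⟩ ∧ x = φ (k : ℕ) α} := by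
          ext y
          constructor
          · rintro ⟨⟨k, β⟩, hk, rfl⟩
            refine ⟨k, β, ?_, rfl⟩
            have h2 : (k : ℕ) < (l : ℕ) := Fin.lt_def.mp hk
            exact Fin.le_def.mpr (by omega : (k : ℕ) ≤ (l : ℕ) - 1)
          · rintro ⟨k, β, hk, rfl⟩
            refine ⟨(k, β), ?_, rfl⟩
            have h2 : (k : ℕ) ≤ (l : ℕ) - 1 := Fin.le_def.mp hk
            exact Fin.lt_def.mpr (show (k : ℕ) < (l : ℕ) by omega)
        rw [hset, ← hcausal]
        refine Submodule.subset_span ⟨p.1, p.2, ?_, rfl⟩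
        have h2 : (p.1 : ℕ) < (l : ℕ) := Fin.lt_def.mp hp1
        exact Fin.le_def.mpr (by omega : ((p.1 : Fin n_t) : ℕ) ≤ (l : ℕ) - 1)
      · by_cases hpe : p.1 ≤ l
        · have hpl : p.1 = l := le_antisymm hpe (not_lt.mp hp1)
          have hc : (⟪v p.1 p.2, w⟫ : ℝ) = 0 := by rw [hpl]; exact hwinner p.2
          rw [if_pos hpe, hc, zero_smul]
          exact Submodule.zero_mem _
        · rw [if_neg hpe, zero_smul]
          exact Submodule.zero_mem _
    rw [Finsupp.mem_span_image_iff_linearCombination] at hwmem'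
    obtain ⟨c, hcsupp, hcw⟩ := hwmem'
    set d : (Fin n_t × E) →₀ ℝ := ∑ ε' : E, Finsupp.single (l, ε') (x ε') with hd
    have hdw : Finsupp.linearCombination ℝ (fun p : Fin n_t × E => φ (p.1 : ℕ) p.2) d = w := by
      rw [hd, map_sum, hwdef]
      exact Finset.sum_congr rfl fun ε' _ => by
        rw [Finsupp.linearCombination_single]
    have hcd : c = d := by
      have h0 : Finsupp.linearCombination ℝ (fun p : Fin n_t × E => φ (p.1 : ℕ) p.2) (c - d)
          = 0 := by rw [map_sub, hcw, hdw, sub_self]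
      have := linearIndependent_iff.mp hind (c - d) h0
      exact sub_eq_zero.mp this
    funext ε'
    have h1 : d (l, ε') = x ε' := by
      rw [hd, Finsupp.finset_sum_apply]
      rw [Finset.sum_eq_single ε']
      · simp
      · intro β _ hβ
        rw [Finsupp.single_apply]
        rw [if_neg (by simp [Prod.ext_iff, hβ])]
      · intro h
        exact absurd (Finset.mem_univ ε') h
    have h2 : c (l, ε') = 0 := by
      by_contra h
      have hmem := Finsupp.mem_supported ℝ c |>.mp hcsupp (Finsupp.mem_support_iff.mpr h)
      simp only [Set.mem_setOf_eq, lt_self_iff_false] at hmem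
    rw [Pi.zero_apply, ← h1, ← hcd, h2]
  -- invertibility of the diagonal blocks
  have hDunit : ∀ l : Fin n_t, IsUnit (Matrix.of fun α ε' : E => R (l, α) (l, ε')) := by
    intro l
    rw [← Matrix.mulVec_injective_iff_isUnit]
    have hker : ∀ z : E → ℝ,
        (Matrix.of fun α ε' : E => R (l, α) (l, ε')).mulVec z = 0 → z = 0 := by
      intro z hz
      refine hDinj l z fun α => ?_
      have := congrFun hz α
      simpa [Matrix.mulVec, dotProduct, hR] using this
    intro x y hxy
    have hsub : (Matrix.of fun α ε' : E => R (l, α) (l, ε')).mulVec (x - y) = 0 := by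
      rw [Matrix.mulVec_sub, hxy, sub_self]
    exact sub_eq_zero.mp (hker (x - y) hsub)
  -- the key inner product identity
  have key : ∀ (l l1 : Fin n_t), (l1 : ℕ) = (l : ℕ) + 1 → ∀ (α ε' : E),
      (⟪v l1 α, P (φ (l : ℕ) ε')⟫ : ℝ)
        = ∑ β : E, (⟪v l1 α, P (v l β)⟫ : ℝ) * ⟪v l β, φ (l : ℕ) ε'⟫ := by
    intro l l1 hl1 α ε'
    have hmem : φ (l : ℕ) ε' ∈ Submodule.span ℝ
        {x : H | ∃ (k : Fin n_t) (α : E), k ≤ l ∧ x = v k α} := by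
      rw [hcausal]
      exact Submodule.subset_span ⟨l, ε', le_rfl, rfl⟩
    have hterm : ∀ p : Fin n_t × E,
        (⟪v l1 α, P ((if p.1 ≤ l then (⟪v p.1 p.2, φ (l : ℕ) ε'⟫ : ℝ) else 0)
          • v p.1 p.2)⟫ : ℝ)
        = if p.1 = l
          then (⟪v l1 α, P (v l p.2)⟫ : ℝ) * ⟪v l p.2, φ (l : ℕ) ε'⟫ else 0 := by
      rintro ⟨k, β⟩
      rw [_root_.map_smul, real_inner_smul_right]
      by_cases hpl : k = l
      · subst hpl
        rw [if_pos le_rfl, if_pos rfl, mul_comm]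
      · by_cases hple : k ≤ l
        · have hlt : (k : ℕ) + 1 < (l1 : ℕ) := by
            rw [hl1]
            have h1 := Fin.le_def.mp hple
            have h2 : (k : ℕ) ≠ (l : ℕ) := fun h => hpl (Fin.val_injective h)
            omega
          rw [hzero l1 k α β hlt, mul_zero, if_neg hpl]
        · rw [if_neg hple, zero_mul, if_neg hpl]
    calc (⟪v l1 α, P (φ (l : ℕ) ε')⟫ : ℝ)
        = ∑ p : Fin n_t × E, (⟪v l1 α, P ((if p.1 ≤ l
            then (⟪v p.1 p.2, φ (l : ℕ) ε'⟫ : ℝ) else 0) • v p.1 p.2)⟫ : ℝ) := by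
          conv_lhs => rw [hexp l (φ (l : ℕ) ε') hmem]
          rw [map_sum, inner_sum]
      _ = ∑ p : Fin n_t × E, (if p.1 = l
            then (⟪v l1 α, P (v l p.2)⟫ : ℝ) * ⟪v l p.2, φ (l : ℕ) ε'⟫ else 0) :=
          Finset.sum_congr rfl fun p _ => hterm p
      _ = ∑ β : E, (⟪v l1 α, P (v l β)⟫ : ℝ) * ⟪v l β, φ (l : ℕ) ε'⟫ := by
          rw [Fintype.sum_prod_type]
          rw [Finset.sum_eq_single l]
          · simp
          · intro k _ hk
            exact Finset.sum_eq_zero fun β _ => if_neg hk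
          · intro h
            exact absurd (Finset.mem_univ l) h
  refine ⟨fun j l ε ε' h => by rw [hPROM]; exact hzero j l ε ε' h, ?_⟩
  intro l hl
  set l1 : Fin n_t := ⟨(l : ℕ) + 1, hl⟩ with hl1def
  have hmul : (Matrix.of fun α ε' : E => PROM (l1, α) (l, ε')) *
      (Matrix.of fun α ε' : E => R (l, α) (l, ε')) =
      (Matrix.of fun α ε' : E => R (l1, α) (l1, ε')) := by
    ext α ε'
    rw [Matrix.mul_apply]
    simp only [Matrix.of_apply]
    rw [hR l1 l1 α ε']
    have hφ1 : φ ((l1 : ℕ)) ε' = P (φ (l : ℕ) ε') := hstep (l : ℕ) ε'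
    rw [hφ1, key l l1 rfl α ε']
    exact Finset.sum_congr rfl fun β _ => by rw [hPROM, hR]
  refine ⟨?_, hmul⟩
  have hdetmul := congrArg Matrix.det hmul
  rw [Matrix.det_mul] at hdetmul
  have hu : IsUnit ((Matrix.of fun α ε' : E => PROM (l1, α) (l, ε')).det *
      (Matrix.of fun α ε' : E => R (l, α) (l, ε')).det) := by
    rw [hdetmul]
    exact (Matrix.isUnit_iff_isUnit_det _).mp (hDunit l1)
  exact (Matrix.isUnit_iff_isUnit_det _).mpr (isUnit_of_mul_isUnit_left hu)
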